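/- For every real number n ≥ 5000, (1 + (n/log n)·(1 − 1/log n))^{n − 1 − (n/log n)·(1 − 1/log n)} < ((n/log n)·(1 + 1/log n) − 2)^{n − (n/log n)·(1 + 1/log n)}. -/

import Mathlib

open Real in
set_option maxHeartbeats 2000000 in
/-- For every real `n ≥ 5000`,
`(1 + (n/log n)(1 − 1/log n))^{n − 1 − (n/log n)(1 − 1/log n)}
  < ((n/log n)(1 + 1/log n) − 2)^{n − (n/log n)(1 + 1/log n)}`. -/
theorem k_upper_bound_ineq (n : ℝ) (hn : 5000 ≤ n) :
    (1 + n / Real.log n * (1 - 1 / Real.log n)) ^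
        (n - 1 - n / Real.log n * (1 - 1 / Real.log n)) <
      (n / Real.log n * (1 + 1 / Real.log n) - 2) ^
        (n - n / Real.log n * (1 + 1 / Real.log n)) := by
  have hn0 : (0:ℝ) < n := by linarith
  set L := Real.log n with hLdef
  have hexpL : Real.exp L = n := Real.exp_log hn0
  have hexp17 : Real.exp 17 = (Real.exp 1)^17 := by rw [← Real.exp_nat_mul]; norm_num
  have hexp17lt : Real.exp 17 < 25000000 := by
    rw [hexp17]
    calc (Real.exp 1)^17 < 2.7182818286^17 :=
          pow_lt_pow_left₀ Real.exp_one_lt_d9 (Real.exp_pos 1).le (by norm_num)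
      _ < 25000000 := by norm_num
  have hexp17gt : (23040000:ℝ) < Real.exp 17 := by
    rw [hexp17]
    calc (23040000:ℝ) < 2.7182818283^17 := by norm_num
      _ < (Real.exp 1)^17 := pow_lt_pow_left₀ Real.exp_one_gt_d9 (by norm_num) (by norm_num)
  have hexp85sq : Real.exp 8.5 ^ 2 = Real.exp 17 := by rw [← Real.exp_nat_mul]; norm_num
  have h85lt : Real.exp 8.5 < 5000 := by nlinarith [Real.exp_pos 8.5]
  have h85gt : (4800:ℝ) < Real.exp 8.5 := by nlinarith [Real.exp_pos 8.5]
  have hL85 : 8.5 < L := by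
    rw [hLdef]; exact (Real.lt_log_iff_exp_lt hn0).mpr (by linarith)
  have hL0 : (0:ℝ) < L := by linarith
  have hLne : L ≠ 0 := ne_of_gt hL0
  -- cubic lower bound on n
  have hn3 : 1600/9*(L-5.5)^3 ≤ n := by
    have h1 : 1 + (L-8.5)/3 ≤ Real.exp ((L-8.5)/3) := by
      have := Real.add_one_le_exp ((L-8.5)/3); linarith
    have h2 : (1 + (L-8.5)/3)^3 ≤ Real.exp (L - 8.5) := by
      calc (1 + (L-8.5)/3)^3 ≤ (Real.exp ((L-8.5)/3))^3 :=
            pow_le_pow_left₀ (by linarith) h1 3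
        _ = Real.exp (L - 8.5) := by rw [← Real.exp_nat_mul]; ring_nf
    have h3 : Real.exp 8.5 * Real.exp (L - 8.5) = n := by
      rw [← Real.exp_add]; rw [show (8.5:ℝ) + (L - 8.5) = L by ring]; exact hexpL
    have h4 : (0:ℝ) ≤ (1 + (L-8.5)/3)^3 := pow_nonneg (by linarith) 3
    calc 1600/9*(L-5.5)^3 = 4800 * (1 + (L-8.5)/3)^3 := by ring
      _ ≤ Real.exp 8.5 * Real.exp (L - 8.5) :=
          mul_le_mul h85gt.le h2 h4 (Real.exp_pos _).le
      _ = n := h3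
  have hn2L : 2*L^2 ≤ n := by nlinarith [sq_nonneg (L-8.5), sq_nonneg (L-5.5)]
  -- log L lower bound
  have hM213 : (2.13:ℝ) ≤ Real.log L := by
    have hexp013 : Real.exp 0.13 ≤ 1/0.87 := by
      have h := Real.add_one_le_exp (-0.13)
      have hp : (0:ℝ) < Real.exp (-0.13) := Real.exp_pos _
      rw [Real.exp_neg] at h
      rw [show (-0.13 : ℝ) + 1 = 0.87 by norm_num] at h
      have h87 : (0:ℝ) < (Real.exp 0.13) := Real.exp_pos _
      rw [le_inv_comm₀ (by norm_num) h87] at h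
      linarith [h]
    have hexp213 : Real.exp 2.13 ≤ 8.5 := by
      have h2 : Real.exp 2.13 = Real.exp 1 * Real.exp 1 * Real.exp 0.13 := by
        rw [← Real.exp_add, ← Real.exp_add]; norm_num
      rw [h2]
      have he := Real.exp_one_lt_d9
      have hp := (Real.exp_pos 1).le
      nlinarith [Real.exp_pos 0.13]
    rw [Real.le_log_iff_exp_le hL0]
    linarith
  set M := Real.log L with hMdef
  -- key quantities
  set A := 1 + n / L * (1 - 1 / L) with hA
  set B := n / L * (1 + 1 / L) - 2 with hB
  have hApos : (0:ℝ) < A := by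
    have : 0 < n / L := div_pos hn0 hL0
    have : 0 < 1 - 1/L := by
      rw [sub_pos]; rw [div_lt_one hL0]; linarith
    have := mul_pos (div_pos hn0 hL0) this
    rw [hA]; linarith
  have hnL2 : 2 ≤ n / L^2 := by
    rw [le_div_iff₀ (by positivity)]; linarith
  have hBpos : (0:ℝ) < B := by
    rw [hB]
    have h1 : 2*L ≤ n/L := by
      rw [le_div_iff₀ hL0]; nlinarith
    have h2 : 0 < 1/L := by positivity
    nlinarith [div_pos hn0 hL0]
  -- reduce to log inequality
  rw [Real.rpow_def_of_pos hApos, Real.rpow_def_of_pos hBpos]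
  apply Real.exp_lt_exp.mpr
  -- bounds on logs
  have hlogA : Real.log A ≤ L - M - 1/(2*L) := by
    have hstep : A ≤ n/L * (1 - 1/(2*L)) := by
      have key : n/L*(1 - 1/(2*L)) - A = n/(2*L^2) - 1 := by
        rw [hA]; field_simp; ring
      have : (1:ℝ) ≤ n/(2*L^2) := by
        rw [le_div_iff₀ (by positivity)]; linarith
      linarith
    have hx : (0:ℝ) < 1 - 1/(2*L) := by
      rw [sub_pos, div_lt_one (by linarith)]; linarith
    calc Real.log A ≤ Real.log (n/L * (1 - 1/(2*L))) := Real.log_le_log hApos hstep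
      _ = Real.log n - Real.log L + Real.log (1 - 1/(2*L)) := by
          rw [Real.log_mul (by positivity) (ne_of_gt hx), Real.log_div (ne_of_gt hn0) hLne]
      _ ≤ L - M + (1 - 1/(2*L) - 1) := by
          have := Real.log_le_sub_one_of_pos hx
          rw [← hLdef, ← hMdef]; linarith
      _ = L - M - 1/(2*L) := by ring
  have hlogBA : 1 - A/B ≤ Real.log B - Real.log A := by
    have h := Real.log_le_sub_one_of_pos (div_pos hApos hBpos)
    rw [Real.log_div (ne_of_gt hApos) (ne_of_gt hBpos)] at h
    linarith
  -- exponent identities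
  have hBA : B - A = 2*n/L^2 - 3 := by rw [hA, hB]; field_simp; ring
  have hX4 : (4:ℝ) ≤ 2*n/L^2 := by
    rw [le_div_iff₀ (by positivity : (0:ℝ) < L^2)]; linarith
  have hX1 : (0:ℝ) < 2*n/L^2 - 1 := by linarith
  have hX3 : (0:ℝ) < 2*n/L^2 - 3 := by linarith
  have hq : n - n / L * (1 + 1 / L) = n - n/L - n/L^2 := by field_simp; ring
  have hqpos : (0:ℝ) < n - n / L * (1 + 1 / L) := by
    rw [hq]
    have h1 : n/L ≤ n/(17/2) := div_le_div_of_nonneg_left hn0.le (by norm_num) (by linarith)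
    have h2 : n/L^2 ≤ n/72 := div_le_div_of_nonneg_left hn0.le (by norm_num) (by nlinarith)
    nlinarith
  have hpq : (n - 1 - n / L * (1 - 1 / L)) = (n - n / L * (1 + 1 / L)) + (2*n/L^2 - 1) := by
    field_simp; ring
  -- q ≥ (L-2) B
  have hqB : (L-2)*B ≤ n - n / L * (1 + 1 / L) := by
    have key : (n - n / L * (1 + 1 / L)) - (L-2)*B = n/L^2 + 2*L - 4 := by
      rw [hB]; field_simp; ring
    have : (0:ℝ) ≤ n/L^2 := by positivity
    linarith
  -- main chain
  set q := n - n / L * (1 + 1 / L) with hqdef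
  have hstep1 : (L-2)*(2*n/L^2-3) ≤ q * (1 - A/B) := by
    have h1 : 1 - A/B = (B-A)/B := by field_simp
    rw [h1, hBA, ← mul_div_assoc, le_div_iff₀ hBpos]
    calc (L-2)*(2*n/L^2-3)*B = ((L-2)*B) * (2*n/L^2-3) := by ring
      _ ≤ q * (2*n/L^2-3) := mul_le_mul_of_nonneg_right hqB hX3.le
  have hstep2 : (2*n/L^2 - 1) * Real.log A ≤ (2*n/L^2-1) * (L - M - 1/(2*L)) :=
    mul_le_mul_of_nonneg_left hlogA hX1.le
  have hstep3 : (2*n/L^2-1) * (L - M - 1/(2*L)) ≤ (2*n/L^2-1) * (L - 2.13 - 1/(2*L)) := by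
    apply mul_le_mul_of_nonneg_left _ hX1.le
    linarith
  have hstep4 : (2*n/L^2-1) * (L - 2.13 - 1/(2*L)) < (L-2)*(2*n/L^2-3) := by
    have hpoly : 4*L^4 - 7.74*L^3 + L^2 < 0.52*n*L + 2*n := by
      nlinarith [mul_le_mul_of_nonneg_left hn3 (by linarith : (0:ℝ) ≤ L), sq_nonneg (L-8.5),
        sq_nonneg L,
        mul_nonneg (mul_nonneg (by linarith : (0:ℝ) ≤ L) (by linarith : (0:ℝ) ≤ L-8.5))
          (sq_nonneg (L-8.5))]
    have hL2 : (0:ℝ) < L^2 := by positivity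
    have e1 : (2*n/L^2-1) * (L - 2.13 - 1/(2*L)) * (2*L^3)
        = (2*n - L^2) * (2*L^2 - 4.26*L - 1) := by field_simp; ring
    have e2 : (L-2)*(2*n/L^2-3) * (2*L^3) = 2*L*(L-2)*(2*n-3*L^2) := by field_simp
    have hgoal : (2*n - L^2) * (2*L^2 - 4.26*L - 1) < 2*L*(L-2)*(2*n-3*L^2) := by nlinarith
    have h2L3 : (0:ℝ) < 2*L^3 := by positivity
    exact (mul_lt_mul_iff_of_pos_right h2L3).mp (by rw [e1, e2]; exact hgoal)
  -- assemble
  have hq_logB : q * Real.log A + (L-2)*(2*n/L^2-3) ≤ q * Real.log B := by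
    have := mul_le_mul_of_nonneg_left hlogBA hqpos.le
    rw [mul_sub] at this
    nlinarith [hstep1]
  calc Real.log A * (n - 1 - n / L * (1 - 1 / L))
      = q * Real.log A + (2*n/L^2 - 1) * Real.log A := by rw [hpq]; ring
    _ ≤ q * Real.log A + (2*n/L^2-1) * (L - M - 1/(2*L)) := by linarith [hstep2]
    _ ≤ q * Real.log A + (2*n/L^2-1) * (L - 2.13 - 1/(2*L)) := by linarith [hstep3]
    _ < q * Real.log A + (L-2)*(2*n/L^2-3) := by linarith [hstep4]
    _ ≤ q * Real.log B := hq_logB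
    _ = Real.log B * (n - n / L * (1 + 1 / L)) := by rw [hqdef]; ring
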